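/- Let μ_1,…,μ_m be nonzero complex numbers with |μ_i| ≠ 1 for every i and |μ_i| > 1 for at least one i. For each positive integer n let a_{1,n},…,a_{m,n} be defined by ∏_{j=1}^m (z − μ_j^n) = z^m + a_{1,n} z^{m−1} + ⋯ + a_{m,n}. Then lim_{n→∞} (1/n)·log₂ max{ |a_{m,n}|·2^{m−1}, max_{1≤i≤m−1} |a_{i,n}|·2^i } = Σ_{i : |μ_i| > 1} log₂ |μ_i|. (That is, the Fujiwara-based upper bound on the minimal stabilizing rate R^f_n also converges to R*.) -/

import Mathlib

set_option maxHeartbeats 1000000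


/-- `acoef m μ n i` is the coefficient `a_{i,n}` (for `1 ≤ i ≤ m`) defined by
`∏_{j=1}^m (z − μ_j^n) = z^m + a_{1,n} z^{m-1} + ⋯ + a_{m,n}`;
i.e. the coefficient of `z^{m-i}` in the monic polynomial with roots `μ_1^n, …, μ_m^n`. -/
noncomputable def acoef (m : ℕ) (μ : Fin m → ℂ) (n i : ℕ) : ℂ :=
  (∏ j : Fin m, (Polynomial.X - Polynomial.C (μ j ^ n))).coeff (m - i)

lemma acoef_eq (m : ℕ) (μ : Fin m → ℂ) (n i : ℕ) (hi : i ≤ m) :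
    acoef m μ n i = (-1) ^ i *
      ∑ t ∈ Finset.univ.powersetCard i, ∏ j ∈ t, μ j ^ n := by
  unfold acoef
  have h1 : (∏ j : Fin m, (Polynomial.X - Polynomial.C (μ j ^ n))) =
      ((Finset.univ.val.map (fun j : Fin m => μ j ^ n)).map
        (fun t => Polynomial.X - Polynomial.C t)).prod := by
    rw [Multiset.map_map]; rfl
  have hcard : Multiset.card (Finset.univ.val.map (fun j : Fin m => μ j ^ n)) = m := by simp
  rw [h1, Multiset.prod_X_sub_C_coeff _ (by rw [hcard]; exact Nat.sub_le m i), hcard,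
    Nat.sub_sub_self hi, Finset.esymm_map_val]

lemma abs_acoef_eq (m : ℕ) (μ : Fin m → ℂ) (n i : ℕ) (hi : i ≤ m) :
    ‖acoef m μ n i‖ =
      ‖∑ t ∈ Finset.univ.powersetCard i, ∏ j ∈ t, μ j ^ n‖ := by
  rw [acoef_eq m μ n i hi, norm_mul, norm_pow]
  simp

lemma one_le_prod_real {ι : Type*} (s : Finset ι) (f : ι → ℝ) (h : ∀ i ∈ s, 1 ≤ f i) :
    1 ≤ ∏ i ∈ s, f i :=
  le_trans (le_of_eq Finset.prod_const_one.symm)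
    (Finset.prod_le_prod (fun i _ => zero_le_one) h)

lemma prod_le_prod_univ' {m : ℕ} (f : Fin m → ℝ) (h1 : ∀ j, 1 ≤ f j) (t : Finset (Fin m)) :
    ∏ j ∈ t, f j ≤ ∏ j : Fin m, f j := by
  rw [← Finset.prod_sdiff (Finset.subset_univ t)]
  exact le_mul_of_one_le_left (Finset.prod_nonneg fun j _ => le_trans zero_le_one (h1 j))
    (one_le_prod_real _ _ fun j _ => h1 j)

lemma choose_le_two_pow' (m i : ℕ) : m.choose i ≤ 2 ^ m := by
  rcases le_or_gt i m with h | h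
  · calc m.choose i ≤ ∑ j ∈ Finset.range (m+1), m.choose j :=
        Finset.single_le_sum (fun j _ => Nat.zero_le _) (Finset.mem_range.mpr (Nat.lt_succ_of_le h))
    _ = 2 ^ m := Nat.sum_range_choose m
  · simp [Nat.choose_eq_zero_of_lt h]

/-- If `|μ_i| ≠ 1` for all `i` and `|μ_i| > 1` for some `i`, then
`(1/n) log₂ max{|a_{m,n}| 2^{m-1}, max_{1 ≤ i ≤ m-1} |a_{i,n}| 2^i}`
converges to `Σ_{i:|μ_i|>1} log₂ |μ_i|`; that is, the Fujiwara-based upper bound on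
the minimal stabilizing rate `R^f_n` also converges to `R*`. -/
theorem fujiwara_rate_bound_tendsto (m : ℕ) (μ : Fin m → ℂ)
    (hμ0 : ∀ i, μ i ≠ 0) (hμ1 : ∀ i, ‖μ i‖ ≠ 1)
    (hex : ∃ i, 1 < ‖μ i‖) :
    Filter.Tendsto
      (fun n : ℕ => (1 / (n : ℝ)) * Real.logb 2
        (Finset.univ.sup' (Finset.univ_nonempty_iff.mpr hex.nonempty)
          (fun i : Fin m => if (i : ℕ) + 1 = m
            then ‖acoef m μ n m‖ * 2 ^ (m - 1)
            else ‖acoef m μ n ((i : ℕ) + 1)‖ * 2 ^ ((i : ℕ) + 1))))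
      Filter.atTop
      (nhds (∑ i ∈ Finset.univ.filter fun i => 1 < ‖μ i‖,
        Real.logb 2 (‖μ i‖))) := by
  classical
  obtain ⟨i₀, hi₀⟩ := id hex
  have hm : 0 < m := i₀.pos
  set E : Finset (Fin m) := Finset.univ.filter (fun i => 1 < ‖μ i‖) with hE
  set R : ℝ := ∑ i ∈ E, Real.logb 2 (‖μ i‖) with hR
  set g : Fin m → ℝ := fun j => max (‖μ j‖) 1 with hg
  have hg1 : ∀ j, 1 ≤ g j := fun j => le_max_right _ _
  have hgE : ∀ j ∈ E, g j = ‖μ j‖ := by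
    intro j hj
    exact max_eq_left (le_of_lt (Finset.mem_filter.mp hj).2)
  have hgnE : ∀ j, j ∉ E → g j = 1 := by
    intro j hj
    have : ¬ 1 < ‖μ j‖ := by
      intro h; exact hj (Finset.mem_filter.mpr ⟨Finset.mem_univ _, h⟩)
    exact max_eq_right (le_of_not_gt this)
  set G : ℕ → ℝ := fun n => ∏ j : Fin m, g j ^ n with hGdef
  have hG1 : ∀ n, 1 ≤ G n := by
    intro n
    show (1:ℝ) ≤ ∏ j : Fin m, g j ^ n
    exact one_le_prod_real _ _ (fun j _ => one_le_pow₀ (hg1 j))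
  have hGpos : ∀ n, 0 < G n := fun n => lt_of_lt_of_le one_pos (hG1 n)
  -- logb of G
  have hlogG : ∀ n : ℕ, Real.logb 2 (G n) = n * R := by
    intro n
    rw [hGdef]
    rw [Real.logb_prod _ _ (fun j _ => by positivity)]
    have : ∀ j : Fin m, Real.logb 2 (g j ^ n) =
        if j ∈ E then (n : ℝ) * Real.logb 2 (‖μ j‖) else 0 := by
      intro j
      by_cases hj : j ∈ E
      · rw [if_pos hj, hgE j hj, Real.logb_pow]
      · rw [if_neg hj, hgnE j hj, one_pow, Real.logb_one]
    rw [Finset.sum_congr rfl (fun j _ => this j), Finset.sum_ite_mem,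
      Finset.univ_inter, Finset.mul_sum]
  -- term bound
  have hterm : ∀ (n : ℕ) (t : Finset (Fin m)),
      ‖∏ j ∈ t, μ j ^ n‖ ≤ G n := by
    intro n t
    rw [norm_prod]
    calc ∏ j ∈ t, ‖μ j ^ n‖ ≤ ∏ j ∈ t, g j ^ n := by
          refine Finset.prod_le_prod (fun j _ => by positivity) (fun j _ => ?_)
          rw [norm_pow]
          exact pow_le_pow_left₀ (norm_nonneg _) (le_max_left _ _) n
      _ ≤ G n := prod_le_prod_univ' (fun j => g j ^ n) (fun j => one_le_pow₀ (hg1 j)) t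
  -- coefficient upper bound
  have hupper : ∀ (n i : ℕ), i ≤ m →
      ‖acoef m μ n i‖ ≤ 2 ^ m * G n := by
    intro n i hi
    rw [abs_acoef_eq m μ n i hi]
    calc ‖∑ t ∈ Finset.univ.powersetCard i, ∏ j ∈ t, μ j ^ n‖
        ≤ ∑ t ∈ Finset.univ.powersetCard i, ‖∏ j ∈ t, μ j ^ n‖ := by
          exact norm_sum_le _ _
      _ ≤ ∑ _t ∈ Finset.univ.powersetCard i, G n :=
          Finset.sum_le_sum (fun t _ => hterm n t)
      _ = ((Finset.univ.powersetCard i).card : ℝ) * G n := by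
          rw [Finset.sum_const, nsmul_eq_mul]
      _ ≤ 2 ^ m * G n := by
          refine mul_le_mul_of_nonneg_right ?_ (le_of_lt (hGpos n))
          have : (Finset.univ.powersetCard i : Finset (Finset (Fin m))).card = m.choose i := by
            simp [Finset.card_powersetCard]
          rw [this]
          exact_mod_cast choose_le_two_pow' m i
  -- set k
  have hEne : E.Nonempty := ⟨i₀, Finset.mem_filter.mpr ⟨Finset.mem_univ _, hi₀⟩⟩
  set k := E.card with hk
  have hk1 : 1 ≤ k := Finset.card_pos.mpr hEne
  have hkm : k ≤ m := by
    have := Finset.card_le_card (Finset.subset_univ E)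
    simpa using this
  -- choose c
  obtain ⟨c, hc0, hc1, hcb⟩ : ∃ c : ℝ, 0 ≤ c ∧ c < 1 ∧
      ∀ j, j ∉ E → ‖μ j‖ ≤ c := by
    have habslt : ∀ j : Fin m, j ∉ E → ‖μ j‖ < 1 := by
      intro j hj
      have : ¬ 1 < ‖μ j‖ := by
        intro h; exact hj (Finset.mem_filter.mpr ⟨Finset.mem_univ _, h⟩)
      exact lt_of_le_of_ne (le_of_not_gt this) (hμ1 j)
    by_cases hne : (Eᶜ : Finset (Fin m)).Nonempty
    · refine ⟨Eᶜ.sup' hne (fun j => ‖μ j‖), ?_, ?_, ?_⟩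
      · obtain ⟨j, hj⟩ := hne
        exact le_trans (norm_nonneg _) (Finset.le_sup' (fun j => ‖μ j‖) hj)
      · rw [Finset.sup'_lt_iff]
        intro j hj
        exact habslt j (Finset.mem_compl.mp hj)
      · intro j hj
        exact Finset.le_sup' (fun j => ‖μ j‖) (Finset.mem_compl.mpr hj)
    · refine ⟨0, le_refl _, one_pos, ?_⟩
      intro j hj
      exact absurd (Finset.mem_compl.mpr hj) (by
        rw [Finset.not_nonempty_iff_eq_empty] at hne
        simp [hne])
  -- product over E equals G
  have hGE : ∀ n : ℕ, (∏ j ∈ E, ‖μ j‖ ^ n) = G n := by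
    intro n
    show (∏ j ∈ E, ‖μ j‖ ^ n) = ∏ j : Fin m, g j ^ n
    rw [← Finset.prod_filter_mul_prod_filter_not Finset.univ
      (fun j => j ∈ E) (fun j => g j ^ n)]
    have h1 : ∀ j ∈ Finset.univ.filter (fun j : Fin m => j ∈ E),
        g j ^ n = ‖μ j‖ ^ n := by
      intro j hj; rw [hgE j (Finset.mem_filter.mp hj).2]
    have h2 : ∀ j ∈ Finset.univ.filter (fun j : Fin m => j ∉ E), g j ^ n = 1 := by
      intro j hj; rw [hgnE j (Finset.mem_filter.mp hj).2, one_pow]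
    rw [Finset.prod_congr rfl h1, Finset.prod_congr rfl h2, Finset.prod_const_one, mul_one]
    congr 1
    ext j
    simp
  -- lower bound for the k-th coefficient
  have hlow : ∀ n : ℕ, G n - 2 ^ m * c ^ n * G n ≤ ‖acoef m μ n k‖ := by
    intro n
    rw [abs_acoef_eq m μ n k hkm]
    have hEmem : E ∈ Finset.univ.powersetCard k :=
      Finset.mem_powersetCard.mpr ⟨Finset.subset_univ _, rfl⟩
    rw [← Finset.add_sum_erase _ _ hEmem]
    have habsE : ‖∏ j ∈ E, μ j ^ n‖ = G n := by
      rw [norm_prod]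
      rw [← hGE n]
      exact Finset.prod_congr rfl (fun j _ => norm_pow _ _)
    have hrest : ‖∑ t ∈ (Finset.univ.powersetCard k).erase E,
        ∏ j ∈ t, μ j ^ n‖ ≤ 2 ^ m * c ^ n * G n := by
      calc ‖∑ t ∈ (Finset.univ.powersetCard k).erase E, ∏ j ∈ t, μ j ^ n‖
          ≤ ∑ t ∈ (Finset.univ.powersetCard k).erase E, ‖∏ j ∈ t, μ j ^ n‖ :=
            norm_sum_le _ _
        _ ≤ ∑ _t ∈ (Finset.univ.powersetCard k).erase E, c ^ n * G n := by
            refine Finset.sum_le_sum (fun t ht => ?_)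
            have htmem := Finset.mem_of_mem_erase ht
            have htne : t ≠ E := Finset.ne_of_mem_erase ht
            obtain ⟨htsub, htcard⟩ := Finset.mem_powersetCard.mp htmem
            -- t has an element outside E
            obtain ⟨j₁, hj₁t, hj₁E⟩ : ∃ j₁ ∈ t, j₁ ∉ E := by
              by_contra h
              push_neg at h
              exact htne (Finset.eq_of_subset_of_card_le h (by rw [htcard]))
            rw [norm_prod, ← Finset.prod_erase_mul _ _ hj₁t]
            have h1 : ‖μ j₁ ^ n‖ ≤ c ^ n := by
              rw [norm_pow]
              exact pow_le_pow_left₀ (norm_nonneg _) (hcb j₁ hj₁E) n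
            have h2 : (∏ j ∈ t.erase j₁, ‖μ j ^ n‖) ≤ G n := by
              calc (∏ j ∈ t.erase j₁, ‖μ j ^ n‖)
                  ≤ ∏ j ∈ t.erase j₁, g j ^ n := by
                    refine Finset.prod_le_prod (fun j _ => by positivity) (fun j _ => ?_)
                    rw [norm_pow]
                    exact pow_le_pow_left₀ (norm_nonneg _) (le_max_left _ _) n
                _ ≤ G n := prod_le_prod_univ' (fun j => g j ^ n)
                    (fun j => one_le_pow₀ (hg1 j)) _
            calc (∏ j ∈ t.erase j₁, ‖μ j ^ n‖) * ‖μ j₁ ^ n‖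
                ≤ G n * c ^ n := by
                  refine mul_le_mul h2 h1 (norm_nonneg _) (le_of_lt (hGpos n))
              _ = c ^ n * G n := mul_comm _ _
        _ = (((Finset.univ.powersetCard k).erase E).card : ℝ) * (c ^ n * G n) := by
            rw [Finset.sum_const, nsmul_eq_mul]
        _ ≤ 2 ^ m * (c ^ n * G n) := by
            refine mul_le_mul_of_nonneg_right ?_
              (mul_nonneg (pow_nonneg hc0 n) (le_of_lt (hGpos n)))
            have hle : ((Finset.univ.powersetCard k).erase E).card ≤ 2 ^ m := by
              calc ((Finset.univ.powersetCard k).erase E).card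
                  ≤ (Finset.univ.powersetCard k : Finset (Finset (Fin m))).card :=
                    Finset.card_le_card (Finset.erase_subset _ _)
                _ = m.choose k := by simp [Finset.card_powersetCard]
                _ ≤ 2 ^ m := choose_le_two_pow' m k
            calc (((Finset.univ.powersetCard k).erase E).card : ℝ)
                ≤ ((2 ^ m : ℕ) : ℝ) := Nat.cast_le.mpr hle
              _ = 2 ^ m := by push_cast; ring
        _ = 2 ^ m * c ^ n * G n := by ring
    calc G n - 2 ^ m * c ^ n * G n
        ≤ ‖∏ j ∈ E, μ j ^ n‖ -
          ‖∑ t ∈ (Finset.univ.powersetCard k).erase E, ∏ j ∈ t, μ j ^ n‖ := by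
          rw [habsE]; linarith
      _ ≤ ‖(∏ j ∈ E, μ j ^ n) +
          ∑ t ∈ (Finset.univ.powersetCard k).erase E, ∏ j ∈ t, μ j ^ n‖ := by
          set x := (∏ j ∈ E, μ j ^ n) with hx
          set y := (∑ t ∈ (Finset.univ.powersetCard k).erase E, ∏ j ∈ t, μ j ^ n) with hy
          have h1 : ‖x‖ ≤ ‖x + y‖ + ‖y‖ := by
            have := norm_add_le (x + y) (-y)
            simpa using this
          linarith
  -- eventually the perturbation term is small
  have hcn : Filter.Tendsto (fun n : ℕ => c ^ n) Filter.atTop (nhds 0) :=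
    tendsto_pow_atTop_nhds_zero_of_lt_one hc0 hc1
  have hev1 : ∀ᶠ n in Filter.atTop, (2:ℝ) ^ m * c ^ n ≤ 1 / 2 := by
    have hpos : (0:ℝ) < 1 / (2 * 2 ^ m) := by positivity
    have := hcn.eventually (eventually_lt_nhds hpos)
    filter_upwards [this] with n hn
    have h2m : (0:ℝ) < 2 ^ m := by positivity
    calc (2:ℝ) ^ m * c ^ n ≤ 2 ^ m * (1 / (2 * 2 ^ m)) :=
          mul_le_mul_of_nonneg_left (le_of_lt hn) (le_of_lt h2m)
      _ = 1 / 2 := by field_simp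
  set ne0 : (Finset.univ : Finset (Fin m)).Nonempty := Finset.univ_nonempty_iff.mpr hex.nonempty
  set F : ℕ → Fin m → ℝ := fun n (i : Fin m) => if (i : ℕ) + 1 = m
      then ‖acoef m μ n m‖ * 2 ^ (m - 1)
      else ‖acoef m μ n ((i : ℕ) + 1)‖ * 2 ^ ((i : ℕ) + 1) with hF
  set S : ℕ → ℝ := fun n => Finset.univ.sup' ne0 (F n) with hS
  show Filter.Tendsto (fun n : ℕ => 1 / (n : ℝ) * Real.logb 2 (S n)) Filter.atTop (nhds R)
  -- eventual two-sided bound on S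
  have hSub : ∀ n : ℕ, S n ≤ 2 ^ (2 * m) * G n := by
    intro n
    refine Finset.sup'_le _ _ (fun i _ => ?_)
    have h2 : ∀ p : ℕ, p ≤ m → ((2:ℝ)) ^ p ≤ 2 ^ m := fun p hp =>
      pow_le_pow_right₀ one_le_two hp
    have hkey : ∀ p q : ℕ, p ≤ m → q ≤ m →
        ‖acoef m μ n p‖ * 2 ^ q ≤ 2 ^ (2 * m) * G n := by
      intro p q hp hq
      calc ‖acoef m μ n p‖ * 2 ^ q
          ≤ (2 ^ m * G n) * 2 ^ m :=
            mul_le_mul (hupper n p hp) (h2 q hq) (by positivity) (by positivity)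
        _ = 2 ^ (2 * m) * G n := by rw [two_mul, pow_add]; ring
    show F n i ≤ 2 ^ (2 * m) * G n
    rw [hF]
    by_cases hi : (i : ℕ) + 1 = m
    · simp only [if_pos hi]
      exact hkey m (m - 1) le_rfl (Nat.sub_le m 1)
    · simp only [if_neg hi]
      exact hkey ((i : ℕ) + 1) ((i : ℕ) + 1) i.isLt i.isLt
  have hSlb : ∀ n : ℕ, (2:ℝ) ^ m * c ^ n ≤ 1 / 2 → G n / 2 ≤ S n := by
    intro n hn
    have hak : G n / 2 ≤ ‖acoef m μ n k‖ := by
      have h1 := hlow n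
      have h2 : 2 ^ m * c ^ n * G n ≤ (1 / 2) * G n :=
        mul_le_mul_of_nonneg_right hn (le_of_lt (hGpos n))
      have := hGpos n
      nlinarith [hGpos n]
    set i₁ : Fin m := ⟨k - 1, by omega⟩ with hi₁
    have hmem : i₁ ∈ (Finset.univ : Finset (Fin m)) := Finset.mem_univ _
    have hFi : ‖acoef m μ n k‖ ≤ F n i₁ := by
      rw [hF]
      have hval : (i₁ : ℕ) = k - 1 := rfl
      by_cases hkm' : k = m
      · have hcond : (i₁ : ℕ) + 1 = m := by rw [hval]; omega
        simp only [if_pos hcond]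
        have h1 : (1:ℝ) ≤ 2 ^ (m - 1) := one_le_pow₀ one_le_two
        calc ‖acoef m μ n k‖ = ‖acoef m μ n m‖ * 1 := by
              rw [hkm', mul_one]
          _ ≤ ‖acoef m μ n m‖ * 2 ^ (m - 1) :=
              mul_le_mul_of_nonneg_left h1 (norm_nonneg _)
      · have hcond : ¬ ((i₁ : ℕ) + 1 = m) := by rw [hval]; omega
        simp only [if_neg hcond]
        have hik : (i₁ : ℕ) + 1 = k := by rw [hval]; omega
        rw [hik]
        have h1 : (1:ℝ) ≤ 2 ^ k := one_le_pow₀ one_le_two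
        calc ‖acoef m μ n k‖ = ‖acoef m μ n k‖ * 1 := (mul_one _).symm
          _ ≤ ‖acoef m μ n k‖ * 2 ^ k :=
              mul_le_mul_of_nonneg_left h1 (norm_nonneg _)
    calc G n / 2 ≤ ‖acoef m μ n k‖ := hak
      _ ≤ F n i₁ := hFi
      _ ≤ S n := Finset.le_sup' (F n) hmem
  -- squeeze
  have hglim : Filter.Tendsto (fun n : ℕ => R - 1 / (n : ℝ)) Filter.atTop (nhds R) := by
    have := (tendsto_const_nhds (x := R) (f := Filter.atTop (α := ℕ))).sub
      (tendsto_const_div_atTop_nhds_zero_nat 1)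
    simpa using this
  have hhlim : Filter.Tendsto (fun n : ℕ => R + (2 * (m : ℝ)) / (n : ℝ))
      Filter.atTop (nhds R) := by
    have := (tendsto_const_nhds (x := R) (f := Filter.atTop (α := ℕ))).add
      (tendsto_const_div_atTop_nhds_zero_nat (2 * (m : ℝ)))
    simpa using this
  refine tendsto_of_tendsto_of_tendsto_of_le_of_le' hglim hhlim ?_ ?_
  · filter_upwards [hev1, Filter.eventually_ge_atTop 1] with n hn hn1
    have hn0 : (0:ℝ) < (n : ℝ) := by exact_mod_cast Nat.lt_of_lt_of_le Nat.zero_lt_one hn1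
    have hSl := hSlb n hn
    have hSpos : 0 < S n := lt_of_lt_of_le (by linarith [hG1 n]) hSl
    have hlog1 : Real.logb 2 (G n / 2) ≤ Real.logb 2 (S n) :=
      Real.logb_le_logb_of_le one_lt_two (by linarith [hGpos n]) hSl
    have hlog2 : Real.logb 2 (G n / 2) = (n : ℝ) * R - 1 := by
      rw [Real.logb_div (ne_of_gt (hGpos n)) two_ne_zero, hlogG n,
        Real.logb_self_eq_one one_lt_two]
    have : ((n : ℝ) * R - 1) ≤ Real.logb 2 (S n) := by rw [← hlog2]; exact hlog1
    have h3 : 1 / (n : ℝ) * ((n : ℝ) * R - 1) ≤ 1 / (n : ℝ) * Real.logb 2 (S n) :=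
      mul_le_mul_of_nonneg_left this (by positivity)
    calc R - 1 / (n : ℝ) = 1 / (n : ℝ) * ((n : ℝ) * R - 1) := by
          field_simp
      _ ≤ 1 / (n : ℝ) * Real.logb 2 (S n) := h3
  · filter_upwards [hev1, Filter.eventually_ge_atTop 1] with n hn hn1
    have hn0 : (0:ℝ) < (n : ℝ) := by exact_mod_cast Nat.lt_of_lt_of_le Nat.zero_lt_one hn1
    have hSl := hSlb n hn
    have hSpos : 0 < S n := lt_of_lt_of_le (by linarith [hG1 n]) hSl
    have hlog1 : Real.logb 2 (S n) ≤ Real.logb 2 ((2:ℝ) ^ (2 * m) * G n) :=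
      Real.logb_le_logb_of_le one_lt_two hSpos (hSub n)
    have hlog2 : Real.logb 2 ((2:ℝ) ^ (2 * m) * G n) = 2 * (m : ℝ) + (n : ℝ) * R := by
      rw [Real.logb_mul (by positivity) (ne_of_gt (hGpos n)), hlogG n, Real.logb_pow,
        Real.logb_self_eq_one one_lt_two]
      push_cast
      ring
    have : Real.logb 2 (S n) ≤ 2 * (m : ℝ) + (n : ℝ) * R := by rw [← hlog2]; exact hlog1
    have h3 : 1 / (n : ℝ) * Real.logb 2 (S n) ≤ 1 / (n : ℝ) * (2 * (m : ℝ) + (n : ℝ) * R) :=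
      mul_le_mul_of_nonneg_left this (by positivity)
    calc 1 / (n : ℝ) * Real.logb 2 (S n)
        ≤ 1 / (n : ℝ) * (2 * (m : ℝ) + (n : ℝ) * R) := h3
      _ = R + (2 * (m : ℝ)) / (n : ℝ) := by field_simp; ring
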